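/- Let S be a finite nonempty set, p : S → S → ℝ a stochastic matrix with all entries strictly positive, g : S → ℝ, and ζ ∈ ℝ. Let Q_ζ be the S×S matrix Q_ζ(i,j) := exp(ζ·g(i))·p(i,j), and suppose ρ > 0 and a strictly positive V : S → ℝ satisfy Q_ζ V = ρ V. Then for every starting state x ∈ S, (1/n)·log((Q_ζ^n 𝟙)(x)) converges to log ρ as n → ∞, where 𝟙 denotes the all-ones vector; in particular the limit exists and is independent of x. -/
import Mathlib


/-- If `ρ > 0` and a strictly positive `V` satisfy `Q_ζ V = ρ V` where
`Q_ζ i j = exp (ζ * g i) * p i j`, then for every starting state `x`,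
`(1/n) * log ((Q_ζ^n 𝟙) x) → log ρ` as `n → ∞`. -/
theorem scaled_log_mgf_tendsto_log_rho
    {S : Type*} [Fintype S] [Nonempty S] [DecidableEq S]
    (p : S → S → ℝ)
    (hp_pos : ∀ i j, 0 < p i j)
    (hp_row : ∀ i, ∑ j, p i j = 1)
    (g : S → ℝ) (ζ : ℝ)
    (ρ : ℝ) (hρ : 0 < ρ)
    (V : S → ℝ) (hV : ∀ i, 0 < V i)
    (heig : (Matrix.of fun i j => Real.exp (ζ * g i) * p i j).mulVec V = ρ • V) :
    ∀ x : S,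
      Filter.Tendsto
        (fun n : ℕ =>
          (1 / (n : ℝ)) *
            Real.log
              (((Matrix.of fun i j => Real.exp (ζ * g i) * p i j) ^ n).mulVec
                (fun _ => (1 : ℝ)) x))
        Filter.atTop (nhds (Real.log ρ)) := by
  intro x
  set Q : Matrix S S ℝ := Matrix.of fun i j => Real.exp (ζ * g i) * p i j with hQdef
  have hQpos : ∀ i j, 0 < Q i j := fun i j => mul_pos (Real.exp_pos _) (hp_pos i j)
  have hQn_nonneg : ∀ n, ∀ i j : S, 0 ≤ (Q ^ n) i j := by
    intro n
    induction n with
    | zero =>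
      intro i j
      simp only [pow_zero, Matrix.one_apply]
      split_ifs <;> norm_num
    | succ n ih =>
      intro i j
      rw [pow_succ, Matrix.mul_apply]
      exact Finset.sum_nonneg fun k _ => mul_nonneg (ih i k) (hQpos k j).le
  have hpowV : ∀ n, (Q ^ n).mulVec V = ρ ^ n • V := by
    intro n
    induction n with
    | zero => simp
    | succ n ih =>
      rw [pow_succ, ← Matrix.mulVec_mulVec, heig, Matrix.mulVec_smul, ih, smul_smul,
        pow_succ, mul_comm]
  have hmono : ∀ (n : ℕ) (u w : S → ℝ), (∀ j, u j ≤ w j) →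
      (Q ^ n).mulVec u x ≤ (Q ^ n).mulVec w x := by
    intro n u w h
    simp only [Matrix.mulVec, dotProduct]
    exact Finset.sum_le_sum fun j _ => mul_le_mul_of_nonneg_left (h j) (hQn_nonneg n x j)
  have hne : (Finset.univ : Finset S).Nonempty := Finset.univ_nonempty
  set c := Finset.univ.inf' hne (fun i => 1 / V i) with hc_def
  set C := Finset.univ.sup' hne (fun i => 1 / V i) with hC_def
  have hc_pos : 0 < c := by
    rw [hc_def, Finset.lt_inf'_iff]
    exact fun i _ => one_div_pos.mpr (hV i)
  have hC_pos : 0 < C := by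
    obtain ⟨i⟩ := ‹Nonempty S›
    exact lt_of_lt_of_le (one_div_pos.mpr (hV i))
      (Finset.le_sup' (fun i => 1 / V i) (Finset.mem_univ i))
  have hcV : ∀ i, c * V i ≤ 1 := by
    intro i
    have h1 : c ≤ 1 / V i := Finset.inf'_le _ (Finset.mem_univ i)
    calc c * V i ≤ (1 / V i) * V i := mul_le_mul_of_nonneg_right h1 (hV i).le
      _ = 1 := one_div_mul_cancel (ne_of_gt (hV i))
  have hCV : ∀ i, 1 ≤ C * V i := by
    intro i
    have h1 : 1 / V i ≤ C := Finset.le_sup' (fun i => 1 / V i) (Finset.mem_univ i)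
    calc (1:ℝ) = (1 / V i) * V i := (one_div_mul_cancel (ne_of_gt (hV i))).symm
      _ ≤ C * V i := mul_le_mul_of_nonneg_right h1 (hV i).le
  have hsmul : ∀ (n : ℕ) (a : ℝ), (Q ^ n).mulVec (fun j => a * V j) x = a * (ρ ^ n * V x) := by
    intro n a
    have : (fun j => a * V j) = a • V := by funext j; simp
    rw [this, Matrix.mulVec_smul, hpowV]
    simp [mul_assoc]
  have hlow : ∀ n : ℕ, c * (ρ ^ n * V x) ≤ (Q ^ n).mulVec (fun _ => (1:ℝ)) x := by
    intro n
    rw [← hsmul n c]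
    exact hmono n _ _ fun j => hcV j
  have hup : ∀ n : ℕ, (Q ^ n).mulVec (fun _ => (1:ℝ)) x ≤ C * (ρ ^ n * V x) := by
    intro n
    rw [← hsmul n C]
    exact hmono n _ _ fun j => hCV j
  have hposn : ∀ n : ℕ, 0 < (Q ^ n).mulVec (fun _ => (1:ℝ)) x := by
    intro n
    exact lt_of_lt_of_le (mul_pos hc_pos (mul_pos (pow_pos hρ n) (hV x))) (hlow n)
  -- the two bounding sequences
  have hlimL : Filter.Tendsto (fun n : ℕ => (Real.log c + Real.log (V x)) / n + Real.log ρ)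
      Filter.atTop (nhds (Real.log ρ)) := by
    have h0 := tendsto_const_div_atTop_nhds_zero_nat (Real.log c + Real.log (V x))
    simpa using h0.add (tendsto_const_nhds (x := Real.log ρ) (f := (Filter.atTop : Filter ℕ)))
  have hlimU : Filter.Tendsto (fun n : ℕ => (Real.log C + Real.log (V x)) / n + Real.log ρ)
      Filter.atTop (nhds (Real.log ρ)) := by
    have h0 := tendsto_const_div_atTop_nhds_zero_nat (Real.log C + Real.log (V x))
    simpa using h0.add (tendsto_const_nhds (x := Real.log ρ) (f := (Filter.atTop : Filter ℕ)))
  apply tendsto_of_tendsto_of_tendsto_of_le_of_le' hlimL hlimU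
  · filter_upwards [Filter.eventually_ge_atTop 1] with n hn
    have hn0 : (0:ℝ) < (n:ℝ) := by exact_mod_cast Nat.pos_of_ne_zero (by omega)
    have hlog : Real.log (c * (ρ ^ n * V x)) ≤
        Real.log ((Q ^ n).mulVec (fun _ => (1:ℝ)) x) :=
      Real.log_le_log (mul_pos hc_pos (mul_pos (pow_pos hρ n) (hV x))) (hlow n)
    have hexp : Real.log (c * (ρ ^ n * V x))
        = Real.log c + ((n : ℝ) * Real.log ρ + Real.log (V x)) := by
      rw [Real.log_mul (ne_of_gt hc_pos) (mul_pos (pow_pos hρ n) (hV x)).ne',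
        Real.log_mul (pow_pos hρ n).ne' (ne_of_gt (hV x)), Real.log_pow]
    have := mul_le_mul_of_nonneg_left hlog (le_of_lt (one_div_pos.mpr hn0))
    calc (Real.log c + Real.log (V x)) / n + Real.log ρ
        = (1 / (n:ℝ)) * (Real.log c + ((n:ℝ) * Real.log ρ + Real.log (V x))) := by
          field_simp; ring
      _ = (1 / (n:ℝ)) * Real.log (c * (ρ ^ n * V x)) := by rw [hexp]
      _ ≤ _ := this
  · filter_upwards [Filter.eventually_ge_atTop 1] with n hn
    have hn0 : (0:ℝ) < (n:ℝ) := by exact_mod_cast Nat.pos_of_ne_zero (by omega)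
    have hlog : Real.log ((Q ^ n).mulVec (fun _ => (1:ℝ)) x)
        ≤ Real.log (C * (ρ ^ n * V x)) :=
      Real.log_le_log (hposn n) (hup n)
    have hexp : Real.log (C * (ρ ^ n * V x))
        = Real.log C + ((n : ℝ) * Real.log ρ + Real.log (V x)) := by
      rw [Real.log_mul (ne_of_gt hC_pos) (mul_pos (pow_pos hρ n) (hV x)).ne',
        Real.log_mul (pow_pos hρ n).ne' (ne_of_gt (hV x)), Real.log_pow]
    have := mul_le_mul_of_nonneg_left hlog (le_of_lt (one_div_pos.mpr hn0))
    calc (1 / (n:ℝ)) * Real.log ((Q ^ n).mulVec (fun _ => (1:ℝ)) x)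
        ≤ (1 / (n:ℝ)) * Real.log (C * (ρ ^ n * V x)) := this
      _ = (1 / (n:ℝ)) * (Real.log C + ((n:ℝ) * Real.log ρ + Real.log (V x))) := by rw [hexp]
      _ = (Real.log C + Real.log (V x)) / n + Real.log ρ := by field_simp; ring
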